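/- Let m ≥ 1, A, B ∈ ℝ^{m×m} and C ∈ ℂ^{m×m} with λ⁻(A) > 0, λ⁻(C) > 0 and |B − Bᵀ|² < 16 λ⁻(A) λ⁻(C). Then the block matrix M = M(A,B,C) is hyperbolic: its characteristic polynomial has no root on the imaginary axis, and the number of its roots (counted with multiplicity) with negative real part equals m, as does the number of roots with positive real part. -/

import Mathlib

open Matrix

/-- The lower spectral bound `λ⁻(A) = min { Re (xᴴ A x) : |x| = 1 }` of a complex matrix,
where `|x|` is the Euclidean norm. -/
noncomputable def lowerSpectralBound {m : ℕ} (A : Matrix (Fin m) (Fin m) ℂ) : ℝ :=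
  sInf { r : ℝ | ∃ x : Fin m → ℂ,
    (∑ i, Complex.normSq (x i)) = 1 ∧ r = (dotProduct (star x) (A.mulVec x)).re }

/-- The operator (spectral) norm of a real matrix with respect to the Euclidean norm. -/
noncomputable def euclideanOpNorm {m : ℕ} (B : Matrix (Fin m) (Fin m) ℝ) : ℝ :=
  sSup { r : ℝ | ∃ x : Fin m → ℝ,
    (∑ i, (x i) ^ 2) = 1 ∧ r = Real.sqrt (∑ i, (B.mulVec x i) ^ 2) }

/-- The block matrix `M(A,B,C) = [[0, I],[A⁻¹C, −A⁻¹B]]` (real matrices regarded as complex). -/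
noncomputable def blockM {m : ℕ} (A B : Matrix (Fin m) (Fin m) ℝ)
    (C : Matrix (Fin m) (Fin m) ℂ) :
    Matrix (Fin m ⊕ Fin m) (Fin m ⊕ Fin m) ℂ :=
  Matrix.fromBlocks 0 1 ((A.map Complex.ofReal)⁻¹ * C)
    (-((A.map Complex.ofReal)⁻¹ * (B.map Complex.ofReal)))

set_option linter.unusedTactic false
set_option linter.unnecessarySeqFocus false

open Polynomial Filter

section aux
variable {m : ℕ}

lemma aux_bddBelow (A : Matrix (Fin m) (Fin m) ℂ) :
    BddBelow { r : ℝ | ∃ x : Fin m → ℂ,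
      (∑ i, Complex.normSq (x i)) = 1 ∧ r = (dotProduct (star x) (A.mulVec x)).re } := by
  refine ⟨-(∑ i, ∑ j, ‖A i j‖), ?_⟩
  rintro r ⟨x, hx, rfl⟩
  have hxi : ∀ i, ‖x i‖ ≤ 1 := by
    intro i
    have h1 : Complex.normSq (x i) ≤ 1 := by
      rw [← hx]
      exact Finset.single_le_sum (f := fun i => Complex.normSq (x i))
        (fun i _ => Complex.normSq_nonneg _) (Finset.mem_univ i)
    have := Complex.sq_norm (x i)
    nlinarith [norm_nonneg (x i)]
  have habs : ‖dotProduct (star x) (A.mulVec x)‖ ≤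
      ∑ i, ∑ j, ‖A i j‖ := by
    unfold dotProduct Matrix.mulVec
    refine (norm_sum_le _ _).trans ?_
    refine Finset.sum_le_sum fun i _ => ?_
    simp only [dotProduct]
    rw [norm_mul]
    calc ‖star x i‖ * ‖∑ j, A i j * x j‖
        ≤ 1 * ∑ j, ‖A i j‖ := by
          refine mul_le_mul ?_ ?_ (norm_nonneg _) zero_le_one
          · simpa using hxi i
          · refine (norm_sum_le _ _).trans (Finset.sum_le_sum fun j _ => ?_)
            rw [norm_mul]
            calc ‖A i j‖ * ‖x j‖ ≤ ‖A i j‖ * 1 :=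
                  mul_le_mul_of_nonneg_left (hxi j) (norm_nonneg _)
              _ = ‖A i j‖ := mul_one _
      _ = ∑ j, ‖A i j‖ := one_mul _
  have := Complex.abs_re_le_norm (dotProduct (star x) (A.mulVec x))
  have h2 := abs_le.mp (this.trans habs)
  linarith [h2.1, h2.2]

lemma aux_specLB_le (A : Matrix (Fin m) (Fin m) ℂ) (x : Fin m → ℂ)
    (hx : (∑ i, Complex.normSq (x i)) = 1) :
    lowerSpectralBound A ≤ (dotProduct (star x) (A.mulVec x)).re :=
  csInf_le (aux_bddBelow A) ⟨x, hx, rfl⟩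

lemma aux_specLB_quad (A : Matrix (Fin m) (Fin m) ℂ) (x : Fin m → ℂ) (hx : x ≠ 0) :
    lowerSpectralBound A * (∑ i, Complex.normSq (x i)) ≤
      (dotProduct (star x) (A.mulVec x)).re := by
  set S := ∑ i, Complex.normSq (x i) with hS
  have hSpos : 0 < S := by
    rcases Function.ne_iff.mp hx with ⟨i, hi⟩
    have h1 : 0 < Complex.normSq (x i) := by
      simpa [Complex.normSq_pos] using hi
    have h2 : ∀ j ∈ Finset.univ, 0 ≤ Complex.normSq (x j) := fun j _ => Complex.normSq_nonneg _
    calc (0:ℝ) < Complex.normSq (x i) := h1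
      _ ≤ S := Finset.single_le_sum h2 (Finset.mem_univ i)
  set s := Real.sqrt S with hs
  have hspos : 0 < s := Real.sqrt_pos.mpr hSpos
  set y : Fin m → ℂ := ((s⁻¹ : ℝ) : ℂ) • x with hy
  have hynorm : (∑ i, Complex.normSq (y i)) = 1 := by
    simp only [hy, Pi.smul_apply, smul_eq_mul, Complex.normSq_mul, Complex.normSq_ofReal]
    rw [← Finset.mul_sum, ← hS, hs]
    have h1 : (√S)⁻¹ * (√S)⁻¹ = S⁻¹ := by
      rw [← Real.sqrt_inv, Real.mul_self_sqrt (by positivity)]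
    rw [h1]
    field_simp
  have key := aux_specLB_le A y hynorm
  have hdot : dotProduct (star y) (A.mulVec y) =
      ((s⁻¹ : ℝ) : ℂ) * ((s⁻¹ : ℝ) : ℂ) * dotProduct (star x) (A.mulVec x) := by
    rw [hy, star_smul, Matrix.mulVec_smul, smul_dotProduct, dotProduct_smul]
    simp only [smul_smul, smul_eq_mul, star_trivial, RCLike.star_def, Complex.conj_ofReal]
    ring
  rw [hdot] at key
  have : (((s⁻¹ : ℝ) : ℂ) * ((s⁻¹ : ℝ) : ℂ) * dotProduct (star x) (A.mulVec x)).re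
      = (s⁻¹ * s⁻¹) * (dotProduct (star x) (A.mulVec x)).re := by
    rw [← Complex.ofReal_mul, Complex.re_ofReal_mul]
  rw [this] at key
  have hs2 : s * s = S := Real.mul_self_sqrt (le_of_lt hSpos)
  have h2 : lowerSpectralBound A * (s * s) ≤ (s * s) * ((s⁻¹ * s⁻¹) *
      (dotProduct (star x) (A.mulVec x)).re) := by
    have := mul_le_mul_of_nonneg_left key (le_of_lt (mul_pos hspos hspos))
    linarith [this]
  rw [hs2] at h2
  calc lowerSpectralBound A * S ≤ (s*s) * ((s⁻¹ * s⁻¹) *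
        (dotProduct (star x) (A.mulVec x)).re) := by rw [← hs2] at h2 ⊢; linarith
    _ = (dotProduct (star x) (A.mulVec x)).re := by
        field_simp
end aux

section aux2
variable {m : ℕ}

lemma aux_opSet_bddAbove (D : Matrix (Fin m) (Fin m) ℝ) :
    BddAbove { r : ℝ | ∃ x : Fin m → ℝ,
      (∑ i, (x i) ^ 2) = 1 ∧ r = Real.sqrt (∑ i, (D.mulVec x i) ^ 2) } := by
  refine ⟨Real.sqrt (∑ i, (∑ j, |D i j|) ^ 2), ?_⟩
  rintro r ⟨x, hx, rfl⟩
  have hxi : ∀ i, |x i| ≤ 1 := by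
    intro i
    have h1 : (x i)^2 ≤ 1 := by
      rw [← hx]
      exact Finset.single_le_sum (f := fun i => (x i)^2) (fun i _ => sq_nonneg _)
        (Finset.mem_univ i)
    nlinarith [abs_nonneg (x i), sq_abs (x i)]
  refine Real.sqrt_le_sqrt (Finset.sum_le_sum fun i _ => ?_)
  have h1 : |D.mulVec x i| ≤ ∑ j, |D i j| := by
    have hmv : D.mulVec x i = ∑ j, D i j * x j := rfl
    rw [hmv]
    refine (Finset.abs_sum_le_sum_abs _ _).trans (Finset.sum_le_sum fun j _ => ?_)
    rw [abs_mul]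
    calc |D i j| * |x j| ≤ |D i j| * 1 := mul_le_mul_of_nonneg_left (hxi j) (abs_nonneg _)
      _ = |D i j| := mul_one _
  have h2 : (0:ℝ) ≤ ∑ j, |D i j| := Finset.sum_nonneg fun j _ => abs_nonneg _
  nlinarith [sq_abs (D.mulVec x i), abs_nonneg (D.mulVec x i)]

lemma aux_opNorm_le (D : Matrix (Fin m) (Fin m) ℝ) (x : Fin m → ℝ)
    (hx : (∑ i, (x i) ^ 2) = 1) :
    Real.sqrt (∑ i, (D.mulVec x i) ^ 2) ≤ euclideanOpNorm D :=
  le_csSup (aux_opSet_bddAbove D) ⟨x, hx, rfl⟩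

lemma aux_opNorm_mulVec (D : Matrix (Fin m) (Fin m) ℝ) (x : Fin m → ℝ) :
    Real.sqrt (∑ i, (D.mulVec x i) ^ 2) ≤
      euclideanOpNorm D * Real.sqrt (∑ i, (x i) ^ 2) := by
  by_cases hx : x = 0
  · simp [hx, Matrix.mulVec_zero]
  have hSpos : 0 < ∑ i, (x i)^2 := by
    rcases Function.ne_iff.mp hx with ⟨i, hi⟩
    have h1 : 0 < (x i)^2 := by nlinarith [abs_pos.mpr hi, sq_abs (x i)]
    exact lt_of_lt_of_le h1 (Finset.single_le_sum (f := fun i => (x i)^2)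
      (fun j _ => sq_nonneg _) (Finset.mem_univ i))
  set s := Real.sqrt (∑ i, (x i)^2) with hs
  have hspos : 0 < s := Real.sqrt_pos.mpr hSpos
  have hs2 : s^2 = ∑ i, (x i)^2 := Real.sq_sqrt (le_of_lt hSpos)
  set y : Fin m → ℝ := s⁻¹ • x with hy
  have hynorm : (∑ i, (y i)^2) = 1 := by
    simp only [hy, Pi.smul_apply, smul_eq_mul, mul_pow]
    rw [← Finset.mul_sum, ← hs2]
    field_simp
  have key := aux_opNorm_le D y hynorm
  have hDy : ∀ i, D.mulVec y i = s⁻¹ * D.mulVec x i := by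
    intro i; rw [hy, Matrix.mulVec_smul]; simp
  have hsum : (∑ i, (D.mulVec y i)^2) = s⁻¹^2 * ∑ i, (D.mulVec x i)^2 := by
    rw [Finset.mul_sum]
    exact Finset.sum_congr rfl fun i _ => by rw [hDy i]; ring
  rw [hsum, Real.sqrt_mul (by positivity), Real.sqrt_sq (by positivity)] at key
  calc Real.sqrt (∑ i, (D.mulVec x i)^2)
      = s * (s⁻¹ * Real.sqrt (∑ i, (D.mulVec x i)^2)) := by field_simp
    _ ≤ s * euclideanOpNorm D := mul_le_mul_of_nonneg_left key (le_of_lt hspos)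
    _ = euclideanOpNorm D * s := mul_comm _ _

lemma aux_det_ne_zero (A : Matrix (Fin m) (Fin m) ℂ) (hA : 0 < lowerSpectralBound A) :
    IsUnit A.det := by
  by_contra h
  have hdet : A.det = 0 := by
    rcases eq_or_ne A.det 0 with h0 | h0
    · exact h0
    · exact absurd (Ne.isUnit h0) h
  obtain ⟨v, hv0, hv⟩ := (Matrix.exists_mulVec_eq_zero_iff).mpr hdet
  have h1 := aux_specLB_quad A v hv0
  rw [hv] at h1
  simp only [dotProduct_zero, Complex.zero_re] at h1
  have hSpos : 0 < ∑ i, Complex.normSq (v i) := by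
    rcases Function.ne_iff.mp hv0 with ⟨i, hi⟩
    have : 0 < Complex.normSq (v i) := by simpa [Complex.normSq_pos] using hi
    exact lt_of_lt_of_le this (Finset.single_le_sum
      (f := fun i => Complex.normSq (v i)) (fun j _ => Complex.normSq_nonneg _)
      (Finset.mem_univ i))
  nlinarith

end aux2

section aux3
variable {m : ℕ}
open Complex

lemma aux_opNorm_nonneg (hm : 1 ≤ m) (D : Matrix (Fin m) (Fin m) ℝ) :
    0 ≤ euclideanOpNorm D := by
  set e : Fin m → ℝ := fun i => if i = ⟨0, hm⟩ then 1 else 0 with he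
  have hx : (∑ i, (e i)^2) = 1 := by
    rw [he]
    rw [Finset.sum_eq_single ⟨0, hm⟩]
    · simp
    · intro b _ hb; simp [hb]
    · intro h; exact absurd (Finset.mem_univ _) h
  calc (0:ℝ) ≤ Real.sqrt (∑ i, (D.mulVec e i)^2) := Real.sqrt_nonneg _
    _ ≤ euclideanOpNorm D := aux_opNorm_le D e hx

lemma aux_im_bound (hm : 1 ≤ m) (B : Matrix (Fin m) (Fin m) ℝ) (x : Fin m → ℂ)
    (hx : (∑ i, Complex.normSq (x i)) = 1) :
    |(dotProduct (star x) ((B.map Complex.ofReal).mulVec x)).im| ≤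
      euclideanOpNorm (B - B.transpose) / 2 := by
  set u : Fin m → ℝ := fun i => (x i).re with hu
  set v : Fin m → ℝ := fun i => (x i).im with hv
  set D := B - B.transpose with hD
  have him : (dotProduct (star x) ((B.map Complex.ofReal).mulVec x)).im
      = ∑ i, ∑ j, B i j * (u i * v j - v i * u j) := by
    have h1 : dotProduct (star x) ((B.map Complex.ofReal).mulVec x)
        = ∑ i, ∑ j, (starRingEnd ℂ) (x i) * ((B i j : ℂ) * x j) := by
      simp only [dotProduct, Matrix.mulVec, Matrix.map_apply, Pi.star_apply,
        RCLike.star_def, Finset.mul_sum]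
    rw [h1, Complex.im_sum]
    refine Finset.sum_congr rfl fun i _ => ?_
    rw [Complex.im_sum]
    refine Finset.sum_congr rfl fun j _ => ?_
    simp only [Complex.mul_im, Complex.mul_re, Complex.conj_re, Complex.conj_im,
      Complex.ofReal_re, Complex.ofReal_im, hu, hv]
    ring
  have hmv : ∀ i, D.mulVec v i = ∑ j, (B i j - B j i) * v j := by
    intro i
    simp [Matrix.mulVec, dotProduct, hD, Matrix.sub_apply, Matrix.transpose_apply]
  have hA1 : ∑ i, u i * (D.mulVec v i)
      = (∑ i, ∑ j, B i j * (u i * v j)) - (∑ i, ∑ j, B j i * (v j * u i)) := by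
    rw [← Finset.sum_sub_distrib]
    refine Finset.sum_congr rfl fun i _ => ?_
    rw [hmv i, Finset.mul_sum, ← Finset.sum_sub_distrib]
    exact Finset.sum_congr rfl fun j _ => by ring
  have hA2 : (∑ i, ∑ j, B j i * (v j * u i)) = ∑ i, ∑ j, B i j * (v i * u j) :=
    Finset.sum_comm
  have hA3 : ∑ i, ∑ j, B i j * (u i * v j - v i * u j)
      = (∑ i, ∑ j, B i j * (u i * v j)) - (∑ i, ∑ j, B i j * (v i * u j)) := by
    rw [← Finset.sum_sub_distrib]
    refine Finset.sum_congr rfl fun i _ => ?_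
    rw [← Finset.sum_sub_distrib]
    exact Finset.sum_congr rfl fun j _ => by ring
  have hsum : ∑ i, ∑ j, B i j * (u i * v j - v i * u j) = ∑ i, u i * (D.mulVec v i) := by
    rw [hA3, hA1, hA2]
  rw [him, hsum]
  set N := euclideanOpNorm D with hN
  have hN0 : 0 ≤ N := aux_opNorm_nonneg hm D
  set S := ∑ i, u i * (D.mulVec v i) with hS
  have hcs := Finset.sum_mul_sq_le_sq_mul_sq Finset.univ u (fun i => D.mulVec v i)
  have hPQ : (∑ i, (u i)^2) + (∑ i, (v i)^2) = 1 := by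
    rw [← Finset.sum_add_distrib, ← hx]
    exact Finset.sum_congr rfl fun i _ => by
      simp [Complex.normSq_apply, hu, hv]; ring
  have hW := aux_opNorm_mulVec D v
  have hu0 : (0:ℝ) ≤ ∑ i, (u i)^2 := Finset.sum_nonneg fun i _ => sq_nonneg _
  have hv0 : (0:ℝ) ≤ ∑ i, (v i)^2 := Finset.sum_nonneg fun i _ => sq_nonneg _
  have hDv0 : (0:ℝ) ≤ ∑ i, (D.mulVec v i)^2 := Finset.sum_nonneg fun i _ => sq_nonneg _
  have hW2 : (∑ i, (D.mulVec v i)^2) ≤ N^2 * (∑ i, (v i)^2) := by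
    have h1 := Real.sq_sqrt hDv0
    have h2 := Real.sq_sqrt hv0
    have h3 : Real.sqrt (∑ i, (D.mulVec v i)^2) ≥ 0 := Real.sqrt_nonneg _
    have h4 : Real.sqrt (∑ i, (v i)^2) ≥ 0 := Real.sqrt_nonneg _
    nlinarith [hW]
  have hsq : S^2 ≤ (N/2)^2 := by
    have h5 : S^2 ≤ (∑ i, (u i)^2) * (N^2 * (∑ i, (v i)^2)) := by
      refine hcs.trans ?_
      exact mul_le_mul_of_nonneg_left hW2 hu0
    have hPQ4 : (∑ i, (u i)^2) * (∑ i, (v i)^2) ≤ 1/4 := by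
      nlinarith [sq_nonneg ((∑ i, (u i)^2) - (∑ i, (v i)^2))]
    have h6 : N^2 * ((∑ i, (u i)^2) * (∑ i, (v i)^2)) ≤ N^2 * (1/4) :=
      mul_le_mul_of_nonneg_left hPQ4 (sq_nonneg N)
    nlinarith [h5, h6]
  nlinarith [_root_.sq_abs S, abs_nonneg S]
end aux3


section aux4
variable {m : ℕ} {n : Type*} [Fintype n] [DecidableEq n]

lemma aux_sum_normSq_pos (x : Fin m → ℂ) (hx : x ≠ 0) :
    0 < ∑ i, Complex.normSq (x i) := by
  rcases Function.ne_iff.mp hx with ⟨i, hi⟩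
  have : 0 < Complex.normSq (x i) := by simpa [Complex.normSq_pos] using hi
  exact lt_of_lt_of_le this (Finset.single_le_sum
    (f := fun i => Complex.normSq (x i)) (fun j _ => Complex.normSq_nonneg _)
    (Finset.mem_univ i))

lemma aux_eval_charpoly (M : Matrix n n ℂ) (z : ℂ) :
    M.charpoly.eval z = (z • (1 : Matrix n n ℂ) - M).det := by
  rw [Matrix.charpoly, ← Polynomial.coe_evalRingHom, RingHom.map_det]
  congr 1
  ext i j
  by_cases h : i = j
  · subst h
    simp [Matrix.charmatrix_apply_eq, Matrix.smul_apply, Matrix.one_apply, Matrix.sub_apply]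
  · simp [Matrix.charmatrix_apply_ne _ _ _ h, Matrix.one_apply_ne h, Matrix.sub_apply,
      Matrix.smul_apply]

lemma aux_root_eigen (M : Matrix n n ℂ) {z : ℂ} (hz : z ∈ M.charpoly.roots) :
    ∃ v : n → ℂ, v ≠ 0 ∧ M.mulVec v = z • v := by
  have h0 : M.charpoly.eval z = 0 := (Polynomial.isRoot_of_mem_roots hz)
  rw [aux_eval_charpoly] at h0
  obtain ⟨v, hv0, hv⟩ := Matrix.exists_mulVec_eq_zero_iff.mpr h0
  refine ⟨v, hv0, ?_⟩
  have h1 : (z • (1 : Matrix n n ℂ) - M).mulVec v = z • v - M.mulVec v := by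
    rw [Matrix.sub_mulVec, Matrix.smul_mulVec, Matrix.one_mulVec]
  rw [h1] at hv
  exact (sub_eq_zero.mp hv).symm

lemma aux_eigen_quad (A B' : Matrix (Fin m) (Fin m) ℝ) (C : Matrix (Fin m) (Fin m) ℂ)
    (hAU : IsUnit ((A.map Complex.ofReal)).det) {z : ℂ}
    (hz : z ∈ (blockM A B' C).charpoly.roots) :
    ∃ x : Fin m → ℂ, x ≠ 0 ∧
      dotProduct (star x) (C.mulVec x) =
        z * dotProduct (star x) ((B'.map Complex.ofReal).mulVec x)
        + z^2 * dotProduct (star x) ((A.map Complex.ofReal).mulVec x) := by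
  obtain ⟨v, hv0, hv⟩ := aux_root_eigen _ hz
  set Ac := A.map Complex.ofReal with hAc
  set Bc := B'.map Complex.ofReal with hBc
  set x : Fin m → ℂ := v ∘ Sum.inl with hx
  set y : Fin m → ℂ := v ∘ Sum.inr with hy
  have hv' : v = Sum.elim x y := by
    funext i; cases i <;> rfl
  rw [hv'] at hv
  rw [blockM, Matrix.fromBlocks_mulVec] at hv
  have hz1 : ∀ i, (0 : Matrix (Fin m) (Fin m) ℂ).mulVec x i
      + (1 : Matrix (Fin m) (Fin m) ℂ).mulVec y i = z * x i := fun i => congrFun hv (Sum.inl i)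
  have hz2 : ∀ i, ((Ac⁻¹ * C).mulVec x i + (-(Ac⁻¹ * Bc)).mulVec y i) = z * y i :=
    fun i => congrFun hv (Sum.inr i)
  have hyx : y = z • x := by
    funext i
    have := hz1 i
    simpa [Matrix.zero_mulVec, Matrix.one_mulVec] using this
  have hxne : x ≠ 0 := by
    intro h
    apply hv0
    rw [hv', hyx, h]
    funext i; cases i <;> simp
  have hrow2 : (Ac⁻¹ * C).mulVec x + (-(Ac⁻¹ * Bc)).mulVec y = z • y := by
    funext i
    simpa using hz2 i
  have hmul : Ac.mulVec ((Ac⁻¹ * C).mulVec x + (-(Ac⁻¹ * Bc)).mulVec y)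
      = Ac.mulVec (z • y) := by rw [hrow2]
  rw [Matrix.mulVec_add, Matrix.mulVec_mulVec, Matrix.mulVec_mulVec, Matrix.mulVec_smul,
    Matrix.mul_neg, ← Matrix.mul_assoc, ← Matrix.mul_assoc,
    Matrix.mul_nonsing_inv _ hAU, Matrix.one_mul, Matrix.one_mul] at hmul
  rw [hyx, Matrix.mulVec_smul, Matrix.neg_mulVec, Matrix.mulVec_smul, smul_smul] at hmul
  -- hmul : C.mulVec x + -(z • Bc.mulVec x) = (z * z) • Ac.mulVec x
  refine ⟨x, hxne, ?_⟩
  have hvec : C.mulVec x = z • Bc.mulVec x + (z * z) • Ac.mulVec x := by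
    funext i
    have hi := congrFun hmul i
    simp only [Pi.add_apply, Pi.smul_apply, Pi.neg_apply, smul_eq_mul] at hi ⊢
    linear_combination hi
  rw [hvec, dotProduct_add, dotProduct_smul, dotProduct_smul]
  simp only [smul_eq_mul]
  ring
end aux4

section aux5
variable {m : ℕ}

lemma aux_im_bound' (hm : 1 ≤ m) (B : Matrix (Fin m) (Fin m) ℝ) (x : Fin m → ℂ) :
    |(dotProduct (star x) ((B.map Complex.ofReal).mulVec x)).im| ≤
      euclideanOpNorm (B - B.transpose) / 2 * (∑ i, Complex.normSq (x i)) := by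
  by_cases hx : x = 0
  · simp [hx]
  set S := ∑ i, Complex.normSq (x i) with hS
  have hSpos : 0 < S := aux_sum_normSq_pos x hx
  set s := Real.sqrt S with hs
  have hspos : 0 < s := Real.sqrt_pos.mpr hSpos
  have hs2 : s * s = S := Real.mul_self_sqrt (le_of_lt hSpos)
  set y : Fin m → ℂ := ((s⁻¹ : ℝ) : ℂ) • x with hy
  have hynorm : (∑ i, Complex.normSq (y i)) = 1 := by
    simp only [hy, Pi.smul_apply, smul_eq_mul, Complex.normSq_mul, Complex.normSq_ofReal]
    rw [← Finset.mul_sum, ← hS]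
    have h1 : s⁻¹ * s⁻¹ = S⁻¹ := by
      rw [← mul_inv]; rw [hs2]
    rw [h1]
    field_simp
  have key := aux_im_bound hm B y hynorm
  have hdot : dotProduct (star y) ((B.map Complex.ofReal).mulVec y) =
      ((s⁻¹ : ℝ) : ℂ) * ((s⁻¹ : ℝ) : ℂ) *
        dotProduct (star x) ((B.map Complex.ofReal).mulVec x) := by
    rw [hy, star_smul, Matrix.mulVec_smul, smul_dotProduct, dotProduct_smul]
    simp only [smul_smul, smul_eq_mul, star_trivial, RCLike.star_def, Complex.conj_ofReal]
    ring
  rw [hdot] at key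
  have him : (((s⁻¹ : ℝ) : ℂ) * ((s⁻¹ : ℝ) : ℂ) *
      dotProduct (star x) ((B.map Complex.ofReal).mulVec x)).im
      = (s⁻¹ * s⁻¹) * (dotProduct (star x) ((B.map Complex.ofReal).mulVec x)).im := by
    rw [← Complex.ofReal_mul]
    simp [Complex.mul_im]
  rw [him, abs_mul, abs_of_pos (by positivity : (0:ℝ) < s⁻¹ * s⁻¹)] at key
  have h2 := mul_le_mul_of_nonneg_left key (le_of_lt (mul_pos hspos hspos))
  rw [← mul_assoc, hs2] at h2
  calc |(dotProduct (star x) ((B.map Complex.ofReal).mulVec x)).im|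
      = (s*s) * ((s⁻¹*s⁻¹) * |(dotProduct (star x) ((B.map Complex.ofReal).mulVec x)).im|)
        := by field_simp
    _ ≤ (s*s) * (euclideanOpNorm (B - B.transpose) / 2) := by
        refine mul_le_mul_of_nonneg_left key (by positivity)
    _ = euclideanOpNorm (B - B.transpose) / 2 * S := by rw [hs2]; ring

lemma aux_scalar_contra (a b c t ω S N lA lC : ℝ)
    (ha : lA * S ≤ a) (hc : lC * S ≤ c) (hb : |b| ≤ N/2 * S) (ht : |t| ≤ 1)
    (hSpos : 0 < S) (hlA : 0 < lA) (hlC : 0 < lC) (hB : N^2 < 16 * lA * lC)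
    (heqre : c = -(ω * (t * b)) - ω^2 * a) : False := by
  have ht2 : t^2 ≤ 1 := by nlinarith [_root_.sq_abs t, abs_nonneg t]
  have hb2 : b^2 ≤ (N/2*S)^2 := by
    nlinarith [_root_.sq_abs b, abs_nonneg b]
  have hapos : 0 < a := lt_of_lt_of_le (by positivity) ha
  have hcpos : 0 < c := lt_of_lt_of_le (by positivity) hc
  rcases eq_or_ne ω 0 with hω0 | hω0
  · rw [hω0] at heqre
    simp at heqre
    nlinarith
  · have hω2 : 0 < ω^2 := by positivity
    have h1 : (c + ω^2*a)^2 = ω^2*(t^2*b^2) := by rw [heqre]; ring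
    have h2 : ω^2*(t^2*b^2) ≤ ω^2*b^2 := by
      refine mul_le_mul_of_nonneg_left ?_ (sq_nonneg ω)
      nlinarith [sq_nonneg b]
    have h3 : ω^2*b^2 ≤ ω^2*((N/2*S)^2) := mul_le_mul_of_nonneg_left hb2 (sq_nonneg ω)
    have h4 : (c + ω^2*a)^2 ≥ 4*(a*c)*ω^2 := by nlinarith [sq_nonneg (c - ω^2*a)]
    have h5 : lA*S*(lC*S) ≤ a*c :=
      mul_le_mul ha hc (by positivity) (le_of_lt hapos)
    have h6 : (N/2*S)^2 < 4*(lA*S*(lC*S)) := by nlinarith [mul_pos hSpos hSpos]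
    nlinarith [mul_lt_mul_of_pos_left h6 hω2,
      mul_le_mul_of_nonneg_left h5 (le_of_lt hω2)]

lemma aux_no_imag (hm : 1 ≤ m) (A B : Matrix (Fin m) (Fin m) ℝ)
    (C : Matrix (Fin m) (Fin m) ℂ)
    (hA : 0 < lowerSpectralBound (A.map Complex.ofReal))
    (hC : 0 < lowerSpectralBound C)
    (hB : euclideanOpNorm (B - B.transpose) ^ 2 <
      16 * lowerSpectralBound (A.map Complex.ofReal) * lowerSpectralBound C)
    (t : ℝ) (ht : |t| ≤ 1) :
    ∀ z ∈ (blockM A (t • B) C).charpoly.roots, z.re ≠ 0 := by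
  intro z hz hre
  have hAU : IsUnit ((A.map Complex.ofReal)).det :=
    aux_det_ne_zero _ hA
  obtain ⟨x, hxne, heq⟩ := aux_eigen_quad A (t • B) C hAU hz
  set S := ∑ i, Complex.normSq (x i) with hS
  have hSpos : 0 < S := aux_sum_normSq_pos x hxne
  set α := dotProduct (star x) ((A.map Complex.ofReal).mulVec x) with hα
  set β := dotProduct (star x) ((B.map Complex.ofReal).mulVec x) with hβ
  set γ := dotProduct (star x) (C.mulVec x) with hγ
  have htB : ((t • B).map Complex.ofReal) = (t : ℂ) • (B.map Complex.ofReal) := by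
    ext i j
    simp [Matrix.map_apply, Complex.ofReal_mul]
  have hβt : dotProduct (star x) (((t • B).map Complex.ofReal).mulVec x)
      = (t : ℂ) * β := by
    rw [htB, Matrix.smul_mulVec, dotProduct_smul, smul_eq_mul]
  rw [hβt] at heq
  -- real parts
  have ha : lowerSpectralBound (A.map Complex.ofReal) * S ≤ α.re :=
    aux_specLB_quad _ x hxne
  have hc : lowerSpectralBound C * S ≤ γ.re := aux_specLB_quad _ x hxne
  have hbb : |β.im| ≤ euclideanOpNorm (B - B.transpose) / 2 * S :=
    aux_im_bound' hm B x
  set ω := z.im with hω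
  set a := α.re with hA'
  set b := β.im with hb'
  set c := γ.re with hc'
  set N := euclideanOpNorm (B - B.transpose) with hN
  set lA := lowerSpectralBound (A.map Complex.ofReal) with hlA
  set lC := lowerSpectralBound C with hlC
  have heqre : c = -(ω * (t * b)) - ω^2 * a := by
    rw [sq] at heq
    have h1 := congrArg Complex.re heq
    simp only [Complex.add_re, Complex.mul_re, Complex.mul_im, Complex.ofReal_re,
      Complex.ofReal_im, hre, zero_mul, mul_zero, zero_add, add_zero, zero_sub, sub_zero] at h1
    rw [hc', h1, hω, hb', hA']
    ring
  exact aux_scalar_contra a b c t ω S N lA lC ha hc hbb ht hSpos hA hC hB heqre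
end aux5

section aux6
open Polynomial

lemma aux_monic_prod {n : ℕ} (P : Polynomial ℂ) (hP : P.Monic) (hd : P.natDegree = n) :
    ∃ r : Fin n → ℂ, P = ∏ i, (Polynomial.X - Polynomial.C (r i)) := by
  subst hd
  have hsplits : P.Splits := IsAlgClosed.splits P
  have hcard : P.roots.card = P.natDegree := (Polynomial.splits_iff_card_roots).mp hsplits
  obtain ⟨l, hl⟩ := Quotient.exists_rep P.roots
  have hlen : l.length = P.natDegree := by rw [← hcard, ← hl]; rfl
  refine ⟨fun i => l.get (Fin.cast hlen.symm i), ?_⟩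
  have h1 := hsplits.eq_prod_roots_of_monic hP
  rw [← hl] at h1
  calc P = (l.map (fun a => X - C a)).prod := by rw [h1]; rfl
    _ = ∏ i : Fin l.length, (X - C (l.get i)) := by
        conv_lhs => rw [← List.ofFn_get l]
        rw [List.map_ofFn, List.prod_ofFn]
        rfl
    _ = ∏ i : Fin P.natDegree, (X - C (l.get (Fin.cast hlen.symm i))) :=
        (Fin.prod_congr' _ hlen.symm).symm

lemma aux_roots_prod {n : ℕ} (r : Fin n → ℂ) :
    (∏ i, (Polynomial.X - Polynomial.C (r i))).roots = Multiset.map r Finset.univ.val := by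
  have h1 : ∏ i, (Polynomial.X - Polynomial.C (r i))
      = ((Multiset.map r Finset.univ.val).map (fun a => X - C a)).prod := by
    rw [Multiset.map_map]
    rfl
  rw [h1, Polynomial.roots_multiset_prod_X_sub_C]

lemma aux_count_filter {n : ℕ} (r : Fin n → ℂ) (p : ℂ → Prop) [DecidablePred p] :
    Multiset.card (Multiset.filter p (Multiset.map r Finset.univ.val))
      = (Finset.univ.filter (fun i => p (r i))).card := by
  rw [Multiset.filter_map, Multiset.card_map]
  rfl

end aux6

section aux7
open Polynomial Filter

lemma aux_count_const {n : ℕ} (p : ℝ → Polynomial ℂ)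
    (hmonic : ∀ t, (p t).Monic) (hdeg : ∀ t, (p t).natDegree = n)
    (hcont : ∀ z : ℂ, Continuous fun t => (p t).eval z)
    (R : ℝ)
    (hbdd : ∀ t ∈ Set.Icc (0:ℝ) 1, ∀ z ∈ (p t).roots, ‖z‖ ≤ R)
    (hax : ∀ t ∈ Set.Icc (0:ℝ) 1, ∀ z ∈ (p t).roots, z.re ≠ 0) :
    Multiset.card (((p 1).roots).filter (fun z => z.re < 0))
      = Multiset.card (((p 0).roots).filter (fun z => z.re < 0)) := by
  classical
  set f : ℝ → ℕ := fun t => Multiset.card (((p t).roots).filter (fun z => z.re < 0)) with hf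
  set F : ℝ → ℝ := fun t => (f t : ℝ) with hF
  -- Key sequential continuity
  have KEY : ∀ T ∈ Set.Icc (0:ℝ) 1, ∀ u : ℕ → ℝ, (∀ k, u k ∈ Set.Icc (0:ℝ) 1) →
      Tendsto u atTop (nhds T) → Tendsto (fun k => F (u k)) atTop (nhds (F T)) := by
    intro T hT u hu huT
    apply Filter.tendsto_of_subseq_tendsto
    intro ns hns
    -- root tuples
    have hch : ∀ k : ℕ, ∃ r : Fin n → ℂ,
        p (u (ns k)) = ∏ i, (Polynomial.X - Polynomial.C (r i)) :=
      fun k => aux_monic_prod _ (hmonic _) (hdeg _)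
    choose r hr using hch
    set K : Set (Fin n → ℂ) := Set.pi Set.univ (fun _ => Metric.closedBall (0:ℂ) R) with hK
    have hKc : IsCompact K := isCompact_univ_pi (fun _ => isCompact_closedBall _ _)
    have hmem : ∀ k, r k ∈ K := by
      intro k
      intro i _
      rw [Metric.mem_closedBall, dist_zero_right]
      have hroot : r k i ∈ (p (u (ns k))).roots := by
        rw [hr k, aux_roots_prod]
        exact Multiset.mem_map_of_mem (r k) (Finset.mem_univ_val i)
      exact hbdd _ (hu _) _ hroot
    obtain ⟨ρ, hρK, ms, hms_mono, hms_tendsto⟩ := hKc.tendsto_subseq hmem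
    have hcoord : ∀ i, Tendsto (fun k => r (ms k) i) atTop (nhds (ρ i)) := by
      intro i
      exact (tendsto_pi_nhds.mp hms_tendsto) i
    have hTend : Tendsto (fun k => u (ns (ms k))) atTop (nhds T) :=
      huT.comp (hns.comp hms_mono.tendsto_atTop)
    -- identify the limit polynomial
    have hPT : p T = ∏ i, (Polynomial.X - Polynomial.C (ρ i)) := by
      refine Polynomial.funext fun z => ?_
      have hseq1 : Tendsto (fun k => (p (u (ns (ms k)))).eval z) atTop
          (nhds ((p T).eval z)) := ((hcont z).tendsto T).comp hTend
      have heval : ∀ k, (p (u (ns (ms k)))).eval z = ∏ i, (z - r (ms k) i) := by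
        intro k
        rw [hr (ms k)]
        simp [Polynomial.eval_prod]
      have hseq2 : Tendsto (fun k => (p (u (ns (ms k)))).eval z) atTop
          (nhds (∏ i, (z - ρ i))) := by
        rw [show (fun k => (p (u (ns (ms k)))).eval z)
            = fun k => ∏ i, (z - r (ms k) i) from funext heval]
        exact tendsto_finset_prod _ fun i _ => tendsto_const_nhds.sub (hcoord i)
      rw [tendsto_nhds_unique hseq1 hseq2]
      simp [Polynomial.eval_prod]
    have hrootsT : (p T).roots = Multiset.map ρ Finset.univ.val := by
      rw [hPT, aux_roots_prod]
    have hsign : ∀ i, (ρ i).re ≠ 0 := by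
      intro i
      refine hax T hT _ ?_
      rw [hrootsT]
      exact Multiset.mem_map_of_mem ρ (Finset.mem_univ_val _)
    have hEviff : ∀ᶠ k in atTop, ∀ i, ((r (ms k) i).re < 0 ↔ (ρ i).re < 0) := by
      rw [eventually_all]
      intro i
      have hlt : Tendsto (fun k => (r (ms k) i).re) atTop (nhds ((ρ i).re)) :=
        (Complex.continuous_re.tendsto _).comp (hcoord i)
      rcases lt_or_gt_of_ne (hsign i) with hneg | hpos
      · filter_upwards [hlt.eventually_lt_const hneg] with k hk
        simp [hk, hneg]
      · filter_upwards [hlt.eventually_const_lt hpos] with k hk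
        constructor
        · intro h; linarith
        · intro h; linarith
    have hEv : ∀ᶠ k in atTop, F (u (ns (ms k))) = F T := by
      filter_upwards [hEviff] with k hk
      have h1 : f (u (ns (ms k))) = (Finset.univ.filter (fun i => (r (ms k) i).re < 0)).card := by
        rw [hf]
        simp only
        rw [hr (ms k), aux_roots_prod, aux_count_filter]
      have h2 : f T = (Finset.univ.filter (fun i => (ρ i).re < 0)).card := by
        rw [hf]
        simp only
        rw [hrootsT, aux_count_filter]
      have h3 : (Finset.univ.filter (fun i => (r (ms k) i).re < 0))
          = (Finset.univ.filter (fun i => (ρ i).re < 0)) := by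
        refine Finset.filter_congr fun i _ => ?_
        exact hk i
      rw [hF]
      simp only
      rw [h1, h2, h3]
    exact ⟨ms, tendsto_nhds_of_eventually_eq hEv⟩
  -- F is continuous on Icc
  have hFc : ContinuousOn F (Set.Icc (0:ℝ) 1) := by
    rw [continuousOn_iff_continuous_restrict]
    refine continuous_iff_seqContinuous.mpr ?_
    intro x a hxa
    exact KEY a a.2 (fun k => (x k : ℝ)) (fun k => (x k).2)
      ((continuous_subtype_val.tendsto a).comp hxa)
  -- integer-valued continuous on preconnected interval: constant
  have h01 : f 1 = f 0 := by
    by_contra hne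
    have h0m : (0:ℝ) ∈ Set.Icc (0:ℝ) 1 := ⟨le_refl _, by norm_num⟩
    have h1m : (1:ℝ) ∈ Set.Icc (0:ℝ) 1 := ⟨by norm_num, le_refl _⟩
    have main : ∀ x y : ℝ, x ∈ Set.Icc (0:ℝ) 1 → y ∈ Set.Icc (0:ℝ) 1 → f x < f y → False := by
      intro x y hx hy hlt
      have hsub := (isPreconnected_Icc).intermediate_value hx hy hFc
      have hcast : (f x : ℝ) + 1 ≤ (f y : ℝ) := by exact_mod_cast Nat.succ_le_of_lt hlt
      have hmem2 : F x + 1/2 ∈ Set.Icc (F x) (F y) := by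
        simp only [hF]
        constructor <;> linarith
      obtain ⟨t, _, hFt⟩ := hsub hmem2
      simp only [hF] at hFt
      rcases Nat.lt_or_ge (f t) (f x + 1) with h | h
      · have h2 : (f t : ℝ) ≤ (f x : ℝ) := by exact_mod_cast Nat.lt_succ_iff.mp h
        linarith
      · have h2 : (f x : ℝ) + 1 ≤ (f t : ℝ) := by exact_mod_cast h
        linarith
    rcases Nat.lt_or_ge (f 1) (f 0) with h | h
    · exact main 1 0 h1m h0m h
    · exact main 0 1 h0m h1m (lt_of_le_of_ne h (fun e => hne e.symm))
  exact h01
end aux7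

section aux8
variable {n : Type*} [Fintype n] [DecidableEq n] [Nonempty n]

lemma aux_root_bound (M : Matrix n n ℂ) {z : ℂ} (hz : z ∈ M.charpoly.roots) :
    ‖z‖ ≤ ∑ i, ∑ j, ‖M i j‖ := by
  obtain ⟨v, hv0, hv⟩ := aux_root_eigen M hz
  obtain ⟨i0, -, hi0⟩ := Finset.exists_max_image Finset.univ (fun i => ‖v i‖)
    ⟨Classical.arbitrary n, Finset.mem_univ _⟩
  have hi0' : ∀ j, ‖v j‖ ≤ ‖v i0‖ := fun j => hi0 j (Finset.mem_univ j)
  have hvpos : 0 < ‖v i0‖ := by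
    rcases (norm_nonneg (v i0)).lt_or_eq with h | h
    · exact h
    · exfalso
      apply hv0
      funext j
      have := hi0' j
      rw [← h] at this
      exact norm_eq_zero.mp (le_antisymm this (norm_nonneg _))
  have h1 : z * v i0 = ∑ j, M i0 j * v j := by
    have := congrFun hv i0
    simp only [Pi.smul_apply, smul_eq_mul] at this
    rw [← this]
    rfl
  have h2 : ‖z‖ * ‖v i0‖ ≤
      (∑ j, ‖M i0 j‖) * ‖v i0‖ := by
    rw [← norm_mul, h1]
    refine (norm_sum_le _ _).trans ?_
    rw [Finset.sum_mul]
    refine Finset.sum_le_sum fun j _ => ?_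
    rw [norm_mul]
    exact mul_le_mul_of_nonneg_left (hi0' j) (norm_nonneg _)
  have h3 : ‖z‖ ≤ ∑ j, ‖M i0 j‖ :=
    le_of_mul_le_mul_right (by linarith [h2]) hvpos
  refine h3.trans ?_
  refine Finset.single_le_sum (f := fun i => ∑ j, ‖M i j‖)
    (fun i _ => Finset.sum_nonneg fun j _ => norm_nonneg _) (Finset.mem_univ i0)
end aux8


open Polynomial in
/-- Lemma B.1 (i): hyperbolicity of the block matrix `M(A,B,C)`. -/
theorem stmt_7 (m : ℕ) (hm : 1 ≤ m) (A B : Matrix (Fin m) (Fin m) ℝ)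
    (C : Matrix (Fin m) (Fin m) ℂ)
    (hA : 0 < lowerSpectralBound (A.map Complex.ofReal))
    (hC : 0 < lowerSpectralBound C)
    (hB : euclideanOpNorm (B - B.transpose) ^ 2 <
      16 * lowerSpectralBound (A.map Complex.ofReal) * lowerSpectralBound C) :
    (∀ z ∈ (blockM A B C).charpoly.roots, z.re ≠ 0) ∧
    Multiset.card ((blockM A B C).charpoly.roots.filter (fun z => z.re < 0)) = m ∧
    Multiset.card ((blockM A B C).charpoly.roots.filter (fun z => 0 < z.re)) = m := by
  classical
  have hnonempty : Nonempty (Fin m ⊕ Fin m) := ⟨Sum.inl ⟨0, hm⟩⟩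
  set Ac := A.map Complex.ofReal with hAc
  set Bc := B.map Complex.ofReal with hBc
  set G := Ac⁻¹ * C with hG
  set H := Ac⁻¹ * Bc with hH
  set Mc : Matrix (Fin m ⊕ Fin m) (Fin m ⊕ Fin m) ℂ := Matrix.fromBlocks 0 1 G 0 with hMc
  set Ml : Matrix (Fin m ⊕ Fin m) (Fin m ⊕ Fin m) ℂ := Matrix.fromBlocks 0 0 0 (-H) with hMl
  have hMt : ∀ t : ℝ, blockM A (t • B) C = Mc + (t:ℂ) • Ml := by
    intro t
    have h1 : ((t • B).map Complex.ofReal) = (t:ℂ) • Bc := by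
      ext i j; simp [Matrix.map_apply, Complex.ofReal_mul, hBc]
    have h2 : Mc + (t:ℂ) • Ml = Matrix.fromBlocks 0 1 G ((t:ℂ) • (-H)) := by
      rw [hMc, hMl, Matrix.fromBlocks_smul, Matrix.fromBlocks_add]
      simp
    rw [h2, blockM, h1, ← hAc, Matrix.mul_smul, ← hH, smul_neg]
  set p : ℝ → Polynomial ℂ := fun t => (Mc + (t:ℂ) • Ml).charpoly with hp
  have hmonic : ∀ t, (p t).Monic := fun t => Matrix.charpoly_monic _
  have hdeg : ∀ t, (p t).natDegree = m + m := by
    intro t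
    rw [hp]
    simp only
    rw [Matrix.charpoly_natDegree_eq_dim, Fintype.card_sum, Fintype.card_fin]
  have hcont : ∀ z : ℂ, Continuous fun t => (p t).eval z := by
    intro z
    have heq : (fun t => (p t).eval z)
        = fun t : ℝ => (z • (1 : Matrix (Fin m ⊕ Fin m) (Fin m ⊕ Fin m) ℂ)
          - (Mc + (t:ℂ) • Ml)).det :=
      funext fun t => aux_eval_charpoly _ z
    rw [heq]
    refine Continuous.matrix_det ?_
    refine continuous_matrix fun i j => ?_
    simp only [Matrix.sub_apply, Matrix.add_apply, Matrix.smul_apply, smul_eq_mul]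
    fun_prop
  set R : ℝ := ∑ i, ∑ j, (‖Mc i j‖ + ‖Ml i j‖) with hR
  have hbdd : ∀ t ∈ Set.Icc (0:ℝ) 1, ∀ z ∈ (p t).roots, ‖z‖ ≤ R := by
    intro t ht z hz
    refine (aux_root_bound _ hz).trans ?_
    rw [hR]
    refine Finset.sum_le_sum fun i _ => Finset.sum_le_sum fun j _ => ?_
    have h1 : ‖(t:ℂ)‖ ≤ 1 := by
      rw [Complex.norm_real, Real.norm_eq_abs, abs_of_nonneg ht.1]; exact ht.2
    calc ‖(Mc + (t:ℂ) • Ml) i j‖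
        ≤ ‖Mc i j‖ + ‖((t:ℂ) • Ml) i j‖ := by
          rw [Matrix.add_apply]; exact norm_add_le _ _
      _ ≤ ‖Mc i j‖ + ‖Ml i j‖ := by
          rw [Matrix.smul_apply, smul_eq_mul, norm_mul]
          have := mul_le_mul_of_nonneg_right h1 (norm_nonneg (Ml i j))
          linarith
  have haxt : ∀ t ∈ Set.Icc (0:ℝ) 1, ∀ z ∈ (p t).roots, z.re ≠ 0 := by
    intro t ht z hz
    have h2 : |t| ≤ 1 := by rw [abs_of_nonneg ht.1]; exact ht.2
    have h3 := aux_no_imag hm A B C hA hC hB t h2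
    rw [hMt t] at h3
    exact h3 z hz
  have hcount := aux_count_const p hmonic hdeg hcont R hbdd haxt
  -- symmetry at t = 0
  have hp0 : p 0 = Mc.charpoly := by rw [hp]; simp
  have hsymm : ∀ z : ℂ, (p 0).eval (-z) = (p 0).eval z := by
    intro z
    rw [hp0, aux_eval_charpoly, aux_eval_charpoly]
    set J : Matrix (Fin m ⊕ Fin m) (Fin m ⊕ Fin m) ℂ := Matrix.fromBlocks 1 0 0 (-1) with hJ
    have hJJ : J * J = 1 := by
      rw [hJ, Matrix.fromBlocks_multiply]
      simp [Matrix.fromBlocks_one]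
    have hdetJJ : J.det * J.det = 1 := by rw [← Matrix.det_mul, hJJ, Matrix.det_one]
    have hone : (1 : Matrix (Fin m ⊕ Fin m) (Fin m ⊕ Fin m) ℂ)
        = Matrix.fromBlocks 1 0 0 1 := Matrix.fromBlocks_one.symm
    have hkey : J * ((z • (1 : Matrix (Fin m ⊕ Fin m) (Fin m ⊕ Fin m) ℂ)) - Mc) * J
        = (z • (1 : Matrix (Fin m ⊕ Fin m) (Fin m ⊕ Fin m) ℂ)) + Mc := by
      rw [hone, Matrix.fromBlocks_smul, hMc, hJ, sub_eq_add_neg, Matrix.fromBlocks_neg,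
        Matrix.fromBlocks_add, Matrix.fromBlocks_multiply, Matrix.fromBlocks_multiply,
        Matrix.fromBlocks_add]
      congr 1 <;> simp
    have hstep1 : ((-z) • (1 : Matrix (Fin m ⊕ Fin m) (Fin m ⊕ Fin m) ℂ) - Mc)
        = -((z • (1 : Matrix (Fin m ⊕ Fin m) (Fin m ⊕ Fin m) ℂ)) + Mc) := by
      rw [neg_smul, neg_add, sub_eq_add_neg]
    rw [hstep1, Matrix.det_neg, Fintype.card_sum, Fintype.card_fin,
      Even.neg_one_pow ⟨m, rfl⟩, one_mul, ← hkey, Matrix.det_mul, Matrix.det_mul]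
    calc J.det * ((z • (1 : Matrix (Fin m ⊕ Fin m) (Fin m ⊕ Fin m) ℂ)) - Mc).det * J.det
        = (J.det * J.det) * ((z • (1 : Matrix (Fin m ⊕ Fin m) (Fin m ⊕ Fin m) ℂ)) - Mc).det := by
          ring
      _ = ((z • (1 : Matrix (Fin m ⊕ Fin m) (Fin m ⊕ Fin m) ℂ)) - Mc).det := by
          rw [hdetJJ, one_mul]
  obtain ⟨r, hr⟩ := aux_monic_prod (p 0) (hmonic 0) (hdeg 0)
  have hprodneg : p 0 = ∏ i, (Polynomial.X - Polynomial.C (-(r i))) := by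
    refine Polynomial.funext fun z => ?_
    have h1 : (∏ i : Fin (m+m), (Polynomial.X - Polynomial.C (-(r i)))).eval z
        = ∏ i, (z + r i) := by simp [Polynomial.eval_prod, sub_neg_eq_add]
    have h2 : (p 0).eval (-z) = ∏ i, (-z - r i) := by
      rw [hr]; simp [Polynomial.eval_prod]
    have h3 : ∏ i : Fin (m+m), (-z - r i) = ∏ i, (z + r i) := by
      have h4 : ∀ i : Fin (m+m), (-z - r i) = (-1) * (z + r i) := fun i => by ring
      rw [Finset.prod_congr rfl (fun i _ => h4 i), Finset.prod_mul_distrib, Finset.prod_const,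
        Finset.card_univ, Fintype.card_fin, Even.neg_one_pow ⟨m, rfl⟩, one_mul]
    calc (p 0).eval z = (p 0).eval (-z) := (hsymm z).symm
      _ = ∏ i, (-z - r i) := h2
      _ = ∏ i, (z + r i) := h3
      _ = _ := h1.symm
  have hroots0a : (p 0).roots = Multiset.map r Finset.univ.val := by
    rw [hr]; exact aux_roots_prod r
  have hroots0b : (p 0).roots = Multiset.map (fun i => -(r i)) Finset.univ.val := by
    rw [hprodneg]; exact aux_roots_prod _
  have count0a : Multiset.card (((p 0).roots).filter (fun z => z.re < 0))
      = (Finset.univ.filter (fun i => (r i).re < 0)).card := by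
    rw [hroots0a, aux_count_filter]
  have count0b : Multiset.card (((p 0).roots).filter (fun z => z.re < 0))
      = (Finset.univ.filter (fun i => 0 < (r i).re)).card := by
    rw [hroots0b, aux_count_filter]
    congr 1
    refine Finset.filter_congr fun i _ => ?_
    simp [Complex.neg_re, neg_lt_zero]
  have hax0 : ∀ i, (r i).re ≠ 0 := by
    intro i
    refine haxt 0 ⟨le_refl _, zero_le_one⟩ (r i) ?_
    rw [hroots0a]
    exact Multiset.mem_map_of_mem r (Finset.mem_univ_val i)
  have hneg : (Finset.univ.filter (fun i : Fin (m+m) => ¬((r i).re < 0)))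
      = (Finset.univ.filter (fun i => 0 < (r i).re)) := by
    refine Finset.filter_congr fun i _ => ?_
    constructor
    · intro h
      exact lt_of_le_of_ne (not_lt.mp h) (Ne.symm (hax0 i))
    · intro h
      exact not_lt.mpr (le_of_lt h)
  have hpartition : (Finset.univ.filter (fun i : Fin (m+m) => (r i).re < 0)).card
      + (Finset.univ.filter (fun i : Fin (m+m) => ¬((r i).re < 0))).card = m + m := by
    rw [Finset.card_filter_add_card_filter_not, Finset.card_univ, Fintype.card_fin]
  have hcount0 : Multiset.card (((p 0).roots).filter (fun z => z.re < 0)) = m := by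
    rw [hneg] at hpartition
    rw [count0a]
    have := count0a.symm.trans count0b
    omega
  -- relate blockM A B C to p 1
  have hgoal : (blockM A B C).charpoly = p 1 := by
    rw [hp]
    simp only
    rw [← hMt 1, one_smul]
  have part1 : ∀ z ∈ (p 1).roots, z.re ≠ 0 := haxt 1 ⟨zero_le_one, le_refl _⟩
  have part2 : Multiset.card (((p 1).roots).filter (fun z => z.re < 0)) = m :=
    hcount.trans hcount0
  have htot : Multiset.card (p 1).roots = m + m := by
    rw [(Polynomial.splits_iff_card_roots).mp (IsAlgClosed.splits _), hdeg 1]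
  have hsplit2 : Multiset.card (((p 1).roots).filter (fun z => z.re < 0))
      + Multiset.card (((p 1).roots).filter (fun z => ¬(z.re < 0))) = m + m := by
    rw [← Multiset.card_add, Multiset.filter_add_not, htot]
  have hfilter2 : ((p 1).roots).filter (fun z => ¬(z.re < 0))
      = ((p 1).roots).filter (fun z => 0 < z.re) := by
    refine Multiset.filter_congr fun z hz => ?_
    constructor
    · intro h
      exact lt_of_le_of_ne (not_lt.mp h) (Ne.symm (part1 z hz))
    · intro h
      exact not_lt.mpr (le_of_lt h)
  have part3 : Multiset.card (((p 1).roots).filter (fun z => 0 < z.re)) = m := by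
    rw [← hfilter2]
    omega
  rw [hgoal]
  exact ⟨part1, part2, part3⟩
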